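/- Let (Q, ρ) be the quiver with relations associated to a finite stratification S of a topological space X: vertices are the strata, there is an arrow S → T iff S ⊂ closure(T) and S ≠ T, and all parallel paths are identified by relations. Then the category of sheaves of R-modules on the finite topological space S (with the quotient topology from p : X → S) is equivalent to the category Rep(Q, ρ) of representations of (Q, ρ) in R-modules, and this equivalence restricts to an equivalence between sheaves with finitely generated stalks and representations with finitely generated stalks. -/

import Mathlib

open CategoryTheory CategoryTheory.Limits TopologicalSpace

/-- Let `(Q, ρ)` be the quiver with relations associated to a finite
stratification of `X` with stratum set `S`: vertices are the strata, there is an arrow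
`s → t` iff `s ⊂ closure t`, and all parallel paths are identified by relations.  Since all
parallel paths are identified, `Rep(Q, ρ)` is the category of functors from the preorder
`s ≤ t ↔ s ∈ closure {t}` on `S` to `R`-modules.  Then the category of sheaves of
`R`-modules on the finite topological space `S` (with the quotient topology from
`p : X → S`) is equivalent to `Rep(Q, ρ)`, the equivalence sending a sheaf to the
representation of its stalks (= sections over the open stars); in particular it restricts
to an equivalence between sheaves with finitely generated stalks and representations with
finitely generated stalks. -/
theorem formality_spheres_stmt4 (R : Type) [CommRing R] [IsNoetherianRing R]
    (X : Type) [TopologicalSpace X] (S : Type) [Finite S]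
    (p : X → S) (hsurj : Function.Surjective p)
    [tS : TopologicalSpace S] (htS : tS = TopologicalSpace.coinduced p ‹_›)
    [Preorder S] (horder : ∀ s t : S, s ≤ t ↔ s ∈ closure ({t} : Set S)) :
    ∃ e : Sheaf (Opens.grothendieckTopology (TopCat.of S)) (ModuleCat.{0} R) ≌
        (S ⥤ ModuleCat.{0} R),
      -- the functor sends a sheaf to the representation formed by its stalks
      (∀ (F : Sheaf (Opens.grothendieckTopology (TopCat.of S)) (ModuleCat.{0} R)) (x : S),
        Nonempty ((e.functor.obj F).obj x ≅
          TopCat.Presheaf.stalk (C := ModuleCat.{0} R) (X := TopCat.of S) F.val x)) ∧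
      -- it restricts to the subcategories with finitely generated stalks
      (∀ F : Sheaf (Opens.grothendieckTopology (TopCat.of S)) (ModuleCat.{0} R),
        (∀ x : S, Module.Finite R (TopCat.Presheaf.stalk (C := ModuleCat.{0} R) (X := TopCat.of S) F.val x)) ↔
        (∀ x : S, Module.Finite R ((e.functor.obj F).obj x))) := by
  classical
  haveI hAD : AlexandrovDiscrete ↑(TopCat.of S) := inferInstanceAs (AlexandrovDiscrete S)
  have hmem : ∀ s t : S, t ≤ s ↔ s ∈ nhdsKer ({t} : Set S) := by
    intro s t
    rw [horder, mem_nhdsKer_singleton, specializes_iff_mem_closure]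
  set J := Opens.grothendieckTopology (TopCat.of S) with hJ
  let U : S → Opens (TopCat.of S) := fun s => ⟨nhdsKer {s}, isOpen_nhdsKer⟩
  have hU : ∀ s, s ∈ U s := fun s => subset_nhdsKer rfl
  have hUle : ∀ {s : S} {V : Opens (TopCat.of S)}, s ∈ V → U s ≤ V := by
    intro s V h
    exact nhdsKer_minimal (Set.singleton_subset_iff.2 h) V.isOpen
  let G : Sᵒᵖ ⥤ Opens (TopCat.of S) :=
    { obj := fun s => U s.unop
      map := fun {s t} f => homOfLE (hUle ((hmem _ _).1 (leOfHom f.unop))) }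
  haveI : G.Full :=
    { map_surjective := fun {s t} h =>
        ⟨(homOfLE ((hmem _ _).2 (h.le (hU s.unop)))).op, Subsingleton.elim _ _⟩ }
  haveI : G.Faithful :=
    { map_injective := fun {s t} f g _ => by
        apply Quiver.Hom.unop_inj; exact Subsingleton.elim _ _ }
  haveI hdense : G.IsDenseSubsite ⊥ J :=
    { isCoverDense' :=
        ⟨fun V => J.superset_covering (by exact le_refl _) (fun x hx =>
          ⟨U x, homOfLE (hUle hx), Presieve.in_coverByImage G (Y := Opposite.op x) _, hU x⟩)⟩
      functorPushforward_mem_iff := by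
        intro s T
        rw [GrothendieckTopology.bot_covering]
        constructor
        · intro h
          obtain ⟨V, f, ⟨t, g, i, hg, -⟩, hx⟩ := h s.unop (hU s.unop)
          have hts : t.unop ≤ s.unop := (hmem _ _).2 (i.le hx)
          ext u fu
          simp only [Sieve.top_apply, iff_true]
          have h' : u ⟶ t := (homOfLE (hts.trans (leOfHom fu.unop))).op
          have he : h' ≫ g = fu := Quiver.Hom.unop_inj (Subsingleton.elim _ _)
          rw [← he]
          exact T.downward_closed hg h'
        · rintro rfl
          intro x hx
          exact ⟨G.obj s, 𝟙 _, ⟨s, 𝟙 _, 𝟙 _, trivial, by simp⟩, hx⟩ }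
  let e1 := (Functor.IsDenseSubsite.sheafEquiv ⊥ J G (ModuleCat.{0} R)).symm
  let e2 : Sheaf (⊥ : GrothendieckTopology Sᵒᵖ) (ModuleCat.{0} R) ≌ (Sᵒᵖᵒᵖ ⥤ ModuleCat.{0} R) :=
    sheafBotEquivalence _
  let e3 : (Sᵒᵖᵒᵖ ⥤ ModuleCat.{0} R) ≌ (S ⥤ ModuleCat.{0} R) :=
    (opOpEquivalence S).congrLeft
  let e := e1.trans (e2.trans e3)
  let I : ∀ (F : Sheaf J (ModuleCat.{0} R)) (x : S),
      (e.functor.obj F).obj x ≅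
        TopCat.Presheaf.stalk (C := ModuleCat.{0} R) (X := TopCat.of S) F.val x := by
    intro F x
    have hinit : IsInitial (⟨U x, hU x⟩ : OpenNhds (X := TopCat.of S) x) :=
      IsInitial.ofUniqueHom (fun Y => homOfLE (hUle Y.2)) (fun Y m => Subsingleton.elim _ _)
    exact (colimit.isoColimitCocone
      ⟨coconeOfDiagramTerminal (terminalOpOfInitial hinit)
        ((OpenNhds.inclusion (X := TopCat.of S) x).op ⋙ F.val),
       colimitOfDiagramTerminal _ _⟩).symm
  refine ⟨e, fun F x => ⟨I F x⟩, fun F => ?_⟩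
  constructor
  · intro h x
    exact Module.Finite.equiv (I F x).symm.toLinearEquiv
  · intro h x
    exact Module.Finite.equiv (I F x).toLinearEquiv
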